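/- Let d : ℕ → ℝ with d(t) > 0 for all t, and suppose there is Θ ≥ 0 such that for all s, t ∈ ℕ the series Σ_{i=0}^{∞} 2^{−(i+1)} |log d(2^i(s+t)) − log d(2^i s) − log d(2^i t)| converges and its sum is at most Θ. Then there exists γ > 0 such that |log(d(t)/γ^t)| ≤ Θ for every t ∈ ℕ, i.e. sup_{t ∈ ℕ} |log d(t) − t·log γ| ≤ Θ. -/
import Mathlib


/-- Theorem `thm:exp`: if the discount factor `d : ℕ → ℝ₊₊` has
log-deviations from stationarity with weighted sums
`∑_{i} 2^{-(i+1)} |log d(2^i(s+t)) - log d(2^i s) - log d(2^i t)|` convergent and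
bounded by `Θ` for all `s, t`, then there is `γ > 0` with
`|log (d t / γ^t)| ≤ Θ` for every `t`. -/
theorem stmt_16 (d : ℕ → ℝ) (hd : ∀ t, 0 < d t) (Θ : ℝ) (hΘ : 0 ≤ Θ)
    (hsummable : ∀ s t : ℕ, Summable (fun i : ℕ =>
      (1 / 2 : ℝ) ^ (i + 1) *
        |Real.log (d (2 ^ i * (s + t))) - Real.log (d (2 ^ i * s)) - Real.log (d (2 ^ i * t))|))
    (hsum : ∀ s t : ℕ,
      (∑' i : ℕ, (1 / 2 : ℝ) ^ (i + 1) *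
        |Real.log (d (2 ^ i * (s + t))) - Real.log (d (2 ^ i * s)) - Real.log (d (2 ^ i * t))|)
        ≤ Θ) :
    ∃ γ : ℝ, 0 < γ ∧ ∀ t : ℕ, |Real.log (d t / γ ^ t)| ≤ Θ := by
  classical
  set f : ℕ → ℝ := fun t => Real.log (d t) with hf
  set a : ℕ → ℕ → ℝ := fun i t => f (2 ^ i * t) / 2 ^ i with ha
  set ψ : ℕ → ℕ → ℕ → ℝ := fun s t i =>
    f (2 ^ i * (s + t)) - f (2 ^ i * s) - f (2 ^ i * t) with hψ
  have hpow : ∀ i t : ℕ, 2 ^ i * (t + t) = 2 ^ (i + 1) * t := by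
    intro i t; ring
  have key : ∀ t i, a (i + 1) t - a i t = ψ t t i / 2 ^ (i + 1) := by
    intro t i
    simp only [ha, hψ, hpow]
    have h2 : (2 : ℝ) ^ (i + 1) = 2 * 2 ^ i := by ring
    have hne : (2 : ℝ) ^ i ≠ 0 := by positivity
    have hne' : (2 : ℝ) ^ (i + 1) ≠ 0 := by positivity
    field_simp
    ring
  have habs : ∀ t i, |a (i + 1) t - a i t| = (1 / 2 : ℝ) ^ (i + 1) * |ψ t t i| := by
    intro t i
    rw [key, abs_div, abs_of_pos (by positivity : (0:ℝ) < (2:ℝ) ^ (i+1))]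
    rw [div_eq_mul_inv, mul_comm]
    congr 1
    rw [one_div, inv_pow]
  -- summability of telescoping differences
  have hsumdiff : ∀ t : ℕ, Summable (fun i => a (i + 1) t - a i t) := by
    intro t
    apply Summable.of_abs
    apply ((hsummable t t).congr (fun i => ?_))
    rw [habs]
  -- define L
  set L : ℕ → ℝ := fun t => f t + ∑' i, (a (i + 1) t - a i t) with hL
  have ha0 : ∀ t, a 0 t = f t := by intro t; simp [ha]
  have htend : ∀ t, Filter.Tendsto (fun n => a n t) Filter.atTop (nhds (L t)) := by
    intro t
    have h1 := (hsumdiff t).hasSum.tendsto_sum_nat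
    have h2 : ∀ n, ∑ i ∈ Finset.range n, (a (i + 1) t - a i t) = a n t - f t := by
      intro n
      have := Finset.sum_range_sub (fun i => a i t) n
      simpa [ha0] using this
    have h3 : Filter.Tendsto (fun n => a n t - f t) Filter.atTop
        (nhds (∑' i, (a (i + 1) t - a i t))) := by
      refine h1.congr fun n => h2 n
    have := h3.add_const (f t)
    simp only [sub_add_cancel] at this
    convert this using 2
    rw [hL]; ring
  -- bound |L t - f t| ≤ Θ
  have hbound : ∀ t, |L t - f t| ≤ Θ := by
    intro t
    have : L t - f t = ∑' i, (a (i + 1) t - a i t) := by rw [hL]; ring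
    rw [this]
    calc |∑' i, (a (i + 1) t - a i t)| ≤ ∑' i, |a (i + 1) t - a i t| := by
          simpa using norm_tsum_le_tsum_norm (f := fun i => a (i+1) t - a i t)
            (by simpa [Real.norm_eq_abs] using
              ((hsummable t t).congr (fun i => (habs t i).symm)))
      _ = ∑' i, (1 / 2 : ℝ) ^ (i + 1) * |ψ t t i| := by
          exact tsum_congr fun i => habs t i
      _ ≤ Θ := hsum t t
  -- additivity of L
  have hadd : ∀ s t, L (s + t) = L s + L t := by
    intro s t
    have hD : Filter.Tendsto (fun i => a i (s + t) - a i s - a i t) Filter.atTop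
        (nhds (L (s + t) - L s - L t)) := ((htend (s + t)).sub (htend s)).sub (htend t)
    have hterm : Filter.Tendsto
        (fun i => (1 / 2 : ℝ) ^ (i + 1) * |ψ s t i|) Filter.atTop (nhds 0) :=
      (hsummable s t).tendsto_atTop_zero
    have hDeq : ∀ i, |a i (s + t) - a i s - a i t| =
        2 * ((1 / 2 : ℝ) ^ (i + 1) * |ψ s t i|) := by
      intro i
      have : a i (s + t) - a i s - a i t = ψ s t i / 2 ^ i := by
        simp only [ha, hψ]
        have hne : (2 : ℝ) ^ i ≠ 0 := by positivity
        field_simp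
      rw [this, abs_div, abs_of_pos (by positivity : (0:ℝ) < (2:ℝ)^i)]
      rw [one_div, inv_pow]
      field_simp
      ring
    have hD0 : Filter.Tendsto (fun i => |a i (s + t) - a i s - a i t|) Filter.atTop
        (nhds 0) := by
      have := hterm.const_mul (2 : ℝ)
      simp only [mul_zero] at this
      exact this.congr fun i => (hDeq i).symm
    have hD0' : Filter.Tendsto (fun i => a i (s + t) - a i s - a i t) Filter.atTop
        (nhds 0) := by
      exact (tendsto_zero_iff_abs_tendsto_zero _).mpr hD0
    have := tendsto_nhds_unique hD hD0'
    linarith [this]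
  have hL0 : L 0 = 0 := by have := hadd 0 0; simpa using this.symm ▸ (by linarith [hadd 0 0])
  have hLlin : ∀ t : ℕ, L t = t * L 1 := by
    intro t
    induction t with
    | zero => simpa using hL0
    | succ n ih =>
        have := hadd n 1
        push_cast
        rw [show n + 1 = n + 1 from rfl] at this
        rw [this, ih]; ring
  refine ⟨Real.exp (L 1), Real.exp_pos _, fun t => ?_⟩
  have hdne : d t ≠ 0 := (hd t).ne'
  have hγne : (Real.exp (L 1)) ^ t ≠ 0 := by positivity
  rw [Real.log_div hdne hγne, Real.log_pow, Real.log_exp]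
  have : Real.log (d t) - t * L 1 = -(L t - f t) := by
    rw [hLlin t, hf]; ring
  rw [this, abs_neg]
  exact hbound t
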